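/- Let m ≥ 1 and let Σ be an m×m real positive definite matrix with unit diagonal (Σ_ii = 1) and off-diagonal entries Σ_ij ∈ [−1/m, 1]. Let X = (X_1,…,X_m) be a centered multivariate Gaussian vector with covariance Σ and set P_i = Φ(−X_i) for i = 1,…,m. Then the arithmetic average P̄ = (1/m) Σ_{i=1}^m P_i satisfies Pr(P̄ ≤ α) ≤ α for every α ∈ (0, 1/(2m)). -/

import Mathlib

set_option maxHeartbeats 1000000
open Real


open MeasureTheory ProbabilityTheory

/-- Standard normal CDF `Φ`. -/
noncomputable def Phi (x : ℝ) : ℝ := ((gaussianReal 0 1 : Measure ℝ) (Set.Iic x)).toReal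

/-- Law of a centered Gaussian vector `X = A Z` with `Z` i.i.d. standard normal,
so that `X` has covariance `A Aᵀ`. -/
noncomputable def gaussianVec (m : ℕ) (A : Matrix (Fin m) (Fin m) ℝ) :
    Measure (Fin m → ℝ) :=
  (Measure.pi fun _ : Fin m => (gaussianReal 0 1 : Measure ℝ)).map A.mulVec

/-- if `Σ` is a positive definite correlation matrix with off-diagonal
entries in `[-1/m,1]` and `X ~ N(0,Σ)`, `P_i = Φ(-X_i)`, then the arithmetic average
`P̄ = (1/m)Σ P_i` satisfies `Pr(P̄ ≤ α) ≤ α` for every `α ∈ (0, 1/(2m))`. -/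
lemma continuous_gpdf : Continuous (gaussianPDFReal 0 1) := by
  unfold gaussianPDFReal
  fun_prop

lemma gpdf_pos (x : ℝ) : 0 < gaussianPDFReal 0 1 x :=
  gaussianPDFReal_pos 0 1 x one_ne_zero

lemma Phi_eq_integral (x : ℝ) : Phi x = ∫ t in Set.Iic x, gaussianPDFReal 0 1 t := by
  rw [Phi, gaussianReal_of_var_ne_zero 0 one_ne_zero,
    withDensity_apply _ measurableSet_Iic, gaussianPDF_def,
    ← ofReal_integral_eq_lintegral_ofReal ((integrable_gaussianPDFReal 0 1).restrict)
      (ae_of_all _ fun t => gaussianPDFReal_nonneg 0 1 t),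
    ENNReal.toReal_ofReal (integral_nonneg fun t => gaussianPDFReal_nonneg 0 1 t)]

lemma Phi_sub_Phi (x y : ℝ) : Phi y - Phi x = ∫ t in x..y, gaussianPDFReal 0 1 t := by
  have ha : IntegrableOn (gaussianPDFReal 0 1) (Set.Iic x) volume :=
    (integrable_gaussianPDFReal 0 1).integrableOn
  have hb : IntegrableOn (gaussianPDFReal 0 1) (Set.Iic y) volume :=
    (integrable_gaussianPDFReal 0 1).integrableOn
  rw [Phi_eq_integral, Phi_eq_integral]
  exact intervalIntegral.integral_Iic_sub_Iic ha hb

lemma hasDerivAt_Phi (x : ℝ) : HasDerivAt Phi (gaussianPDFReal 0 1 x) x := by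
  have h : ∀ y, Phi 0 + ∫ t in (0:ℝ)..y, gaussianPDFReal 0 1 t = Phi y := by
    intro y; rw [← Phi_sub_Phi]; ring
  have : HasDerivAt (fun y => Phi 0 + ∫ t in (0:ℝ)..y, gaussianPDFReal 0 1 t)
      (gaussianPDFReal 0 1 x) x := by
    refine HasDerivAt.const_add _ ?_
    refine intervalIntegral.integral_hasDerivAt_right
      ((integrable_gaussianPDFReal 0 1).intervalIntegrable)
      continuous_gpdf.stronglyMeasurable.stronglyMeasurableAtFilter
      continuous_gpdf.continuousAt
  simpa [funext h] using this

lemma continuous_Phi : Continuous Phi :=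
  continuous_iff_continuousAt.2 fun x => (hasDerivAt_Phi x).continuousAt

lemma strictMono_Phi : StrictMono Phi := by
  intro x y hxy
  have : 0 < ∫ t in x..y, gaussianPDFReal 0 1 t :=
    intervalIntegral.intervalIntegral_pos_of_pos
      ((integrable_gaussianPDFReal 0 1).intervalIntegrable) gpdf_pos hxy
  linarith [Phi_sub_Phi x y]

lemma Phi_neg (x : ℝ) : Phi (-x) = 1 - Phi x := by
  have hmap : (gaussianReal 0 1 : Measure ℝ).map (fun y => -y) = gaussianReal 0 1 := by
    have h := gaussianReal_map_const_mul (μ := 0) (v := 1) (-1)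
    have h2 : (NNReal.mk ((-1:ℝ)^2) (sq_nonneg _)) * 1 = 1 := by
      rw [← NNReal.coe_inj]; norm_num
    rw [h2, mul_zero] at h
    simpa [neg_one_mul] using h
  have hIic : (gaussianReal 0 1 : Measure ℝ) (Set.Iic (-x))
      = (gaussianReal 0 1 : Measure ℝ) (Set.Ici x) := by
    conv_lhs => rw [← hmap]
    rw [Measure.map_apply measurable_neg measurableSet_Iic]
    congr 1
    ext y
    simp [neg_le]
  have hatom : (gaussianReal 0 1 : Measure ℝ) {x} = 0 :=
    gaussianReal_absolutelyContinuous 0 one_ne_zero (measure_singleton x)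
  have hIio : (gaussianReal 0 1 : Measure ℝ) (Set.Iio x)
      = (gaussianReal 0 1 : Measure ℝ) (Set.Iic x) := by
    have : (gaussianReal 0 1 : Measure ℝ) (Set.Iic x)
        = (gaussianReal 0 1 : Measure ℝ) (Set.Iio x) + (gaussianReal 0 1 : Measure ℝ) {x} := by
      rw [← measure_union (by simp) (measurableSet_singleton x), Set.Iio_union_right]
    rw [this, hatom, add_zero]
  have hIci : (gaussianReal 0 1 : Measure ℝ) (Set.Ici x)
      = 1 - (gaussianReal 0 1 : Measure ℝ) (Set.Iio x) := by
    rw [← measure_univ (μ := (gaussianReal 0 1 : Measure ℝ))]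
    rw [← Set.Iio_union_Ici (a := x), measure_union (Set.Iio_disjoint_Ici le_rfl) measurableSet_Ici]
    rw [ENNReal.add_sub_cancel_left (measure_ne_top _ _)]
  have h1 : (gaussianReal 0 1 : Measure ℝ) (Set.Iic x) ≤ 1 := prob_le_one
  rw [Phi, Phi, hIic, hIci, hIio, ENNReal.toReal_sub_of_le h1 ENNReal.one_ne_top]
  simp

lemma Phi_zero : Phi 0 = 1 / 2 := by
  have := Phi_neg 0
  rw [neg_zero] at this
  linarith

lemma Phi_tendsto_one : Filter.Tendsto Phi Filter.atTop (nhds 1) := by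
  have h := MeasureTheory.tendsto_measure_Iic_atTop (gaussianReal 0 1 : Measure ℝ)
  rw [measure_univ] at h
  have := (ENNReal.tendsto_toReal ENNReal.one_ne_top).comp h
  simp only [ENNReal.toReal_one] at this
  exact this

/-- For `0 < α < 1/2` there is `q` with `Phi q = 1 - α`. -/
lemma exists_Phi_eq {α : ℝ} (h0 : 0 < α) (h2 : α < 1/2) : ∃ q : ℝ, Phi q = 1 - α := by
  have hb : ∃ b : ℝ, 1 - α < Phi b := by
    have : ∀ᶠ b in Filter.atTop, Phi b > 1 - α :=
      Phi_tendsto_one.eventually_const_lt (by linarith)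
    exact this.exists
  obtain ⟨b, hb⟩ := hb
  have h0' : Phi 0 ≤ 1 - α := by rw [Phi_zero]; linarith
  have := intermediate_value_univ 0 b continuous_Phi (Set.mem_Icc.2 ⟨h0', le_of_lt hb⟩)
  exact this

lemma convexOn_Phi_neg : ConvexOn ℝ (Set.Ici 0) (fun x => Phi (-x)) := by
  have hderiv : ∀ x : ℝ, HasDerivAt (fun x => Phi (-x)) (-(gaussianPDFReal 0 1 (-x))) x := by
    intro x
    simpa [Function.comp_def] using (hasDerivAt_Phi (-x)).comp x (hasDerivAt_neg x)
  have hd : deriv (fun x => Phi (-x)) = fun x => -(gaussianPDFReal 0 1 (-x)) :=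
    funext fun x => (hderiv x).deriv
  have hmono : MonotoneOn (deriv fun x => Phi (-x)) (interior (Set.Ici (0:ℝ))) := by
    rw [hd, interior_Ici]
    intro x hx y hy hxy
    simp only [neg_le_neg_iff]
    unfold gaussianPDFReal
    simp only [sub_zero, NNReal.coe_one, mul_one]
    have hx0 : (0:ℝ) < x := hx
    have hsq : x^2 ≤ y^2 := by nlinarith
    apply mul_le_mul_of_nonneg_left _ (by positivity)
    rw [Real.exp_le_exp]
    rw [neg_sq, neg_sq]
    nlinarith
  have hcont : Continuous fun x : ℝ => Phi (-x) := continuous_Phi.comp continuous_neg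
  exact MonotoneOn.convexOn_of_deriv (convex_Ici 0) hcont.continuousOn
    (fun x _ => (hderiv x).differentiableAt.differentiableWithinAt) hmono

/-- Key algebraic identity for Gaussian convolution. -/
lemma gaussianPDFReal_mul_identity {v₁ v₂ : NNReal} (hv₁ : v₁ ≠ 0) (hv₂ : v₂ ≠ 0) (x y : ℝ) :
    gaussianPDFReal 0 v₁ x * gaussianPDFReal x v₂ y
      = gaussianPDFReal 0 (v₁ + v₂) y * gaussianPDFReal (y * v₁ / (v₁ + v₂)) (v₁ * v₂ / (v₁ + v₂)) x := by
  have ha : (0:ℝ) < v₁ := lt_of_le_of_ne v₁.coe_nonneg (by exact_mod_cast (Ne.symm hv₁))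
  have hb : (0:ℝ) < v₂ := lt_of_le_of_ne v₂.coe_nonneg (by exact_mod_cast (Ne.symm hv₂))
  set a : ℝ := (v₁ : ℝ) with ha'
  set b : ℝ := (v₂ : ℝ) with hb'
  have hab : (0:ℝ) < a + b := by linarith
  have hcoe1 : ((v₁ + v₂ : NNReal) : ℝ) = a + b := by push_cast; rfl
  have hcoe2 : ((v₁ * v₂ / (v₁ + v₂) : NNReal) : ℝ) = a * b / (a + b) := by push_cast; rfl
  unfold gaussianPDFReal
  rw [hcoe1, hcoe2]
  have hconst : (Real.sqrt (2 * π * a))⁻¹ * (Real.sqrt (2 * π * b))⁻¹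
      = (Real.sqrt (2 * π * (a + b)))⁻¹ * (Real.sqrt (2 * π * (a * b / (a + b))))⁻¹ := by
    rw [← mul_inv, ← mul_inv, ← Real.sqrt_mul (by positivity), ← Real.sqrt_mul (by positivity)]
    congr 1
    field_simp
  have hexp : Real.exp (-(x - 0) ^ 2 / (2 * a)) * Real.exp (-(y - x) ^ 2 / (2 * b))
      = Real.exp (-(y - 0) ^ 2 / (2 * (a + b)))
        * Real.exp (-(x - y * a / (a + b)) ^ 2 / (2 * (a * b / (a + b)))) := by
    rw [← Real.exp_add, ← Real.exp_add]
    congr 1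
    field_simp
    ring
  calc (Real.sqrt (2 * π * a))⁻¹ * Real.exp (-(x - 0) ^ 2 / (2 * a))
      * ((Real.sqrt (2 * π * b))⁻¹ * Real.exp (-(y - x) ^ 2 / (2 * b)))
      = ((Real.sqrt (2 * π * a))⁻¹ * (Real.sqrt (2 * π * b))⁻¹)
        * (Real.exp (-(x - 0) ^ 2 / (2 * a)) * Real.exp (-(y - x) ^ 2 / (2 * b))) := by ring
    _ = ((Real.sqrt (2 * π * (a + b)))⁻¹ * (Real.sqrt (2 * π * (a * b / (a + b))))⁻¹)
        * (Real.exp (-(y - 0) ^ 2 / (2 * (a + b)))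
          * Real.exp (-(x - y * a / (a + b)) ^ 2 / (2 * (a * b / (a + b))))) := by
        rw [hconst, hexp]
    _ = _ := by ring

lemma lintegral_gaussianPDF_mul {v₁ v₂ : NNReal} (hv₁ : v₁ ≠ 0) (hv₂ : v₂ ≠ 0) (y : ℝ) :
    ∫⁻ x, gaussianPDF 0 v₁ x * gaussianPDF x v₂ y = gaussianPDF 0 (v₁ + v₂) y := by
  have h12 : v₁ * v₂ / (v₁ + v₂) ≠ 0 := by
    simp only [ne_eq, div_eq_zero_iff, mul_eq_zero]
    push_neg
    exact ⟨⟨hv₁, hv₂⟩, by simp [hv₁]⟩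
  calc ∫⁻ x, gaussianPDF 0 v₁ x * gaussianPDF x v₂ y
      = ∫⁻ x, gaussianPDF 0 (v₁ + v₂) y
          * gaussianPDF (y * v₁ / (v₁ + v₂)) (v₁ * v₂ / (v₁ + v₂)) x := by
        congr 1
        ext x
        rw [gaussianPDF, gaussianPDF, ← ENNReal.ofReal_mul (gaussianPDFReal_nonneg _ _ _),
          gaussianPDFReal_mul_identity hv₁ hv₂ x y, gaussianPDF, gaussianPDF,
          ENNReal.ofReal_mul (gaussianPDFReal_nonneg _ _ _)]
    _ = gaussianPDF 0 (v₁ + v₂) y * ∫⁻ x, gaussianPDF (y * v₁ / (v₁ + v₂)) (v₁ * v₂ / (v₁ + v₂)) x := by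
        rw [lintegral_const_mul _ (measurable_gaussianPDF _ _)]
    _ = gaussianPDF 0 (v₁ + v₂) y := by
        rw [lintegral_gaussianPDF_eq_one _ h12, mul_one]

lemma measurable_gaussianPDF_pair (v : NNReal) :
    Measurable (fun p : ℝ × ℝ => gaussianPDF p.1 v p.2) := by
  unfold gaussianPDF gaussianPDFReal
  exact ENNReal.measurable_ofReal.comp (by fun_prop)

/-- Convolution of centered Gaussians. -/
lemma gaussianReal_conv (v₁ v₂ : NNReal) :
    ((gaussianReal 0 v₁).prod (gaussianReal 0 v₂)).map (fun p : ℝ × ℝ => p.1 + p.2)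
      = gaussianReal 0 (v₁ + v₂) := by
  by_cases hv₁ : v₁ = 0
  · subst hv₁
    rw [gaussianReal_zero_var, Measure.dirac_prod, zero_add,
      Measure.map_map measurable_add measurable_prodMk_left]
    have : ((fun p : ℝ × ℝ => p.1 + p.2) ∘ Prod.mk (0:ℝ)) = fun y : ℝ => 0 + y := rfl
    rw [this]
    simpa using gaussianReal_map_const_add (μ := 0) (v := v₂) 0
  by_cases hv₂ : v₂ = 0
  · subst hv₂
    rw [gaussianReal_zero_var, Measure.prod_dirac, add_zero,
      Measure.map_map measurable_add measurable_prodMk_right]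
    have : ((fun p : ℝ × ℝ => p.1 + p.2) ∘ (fun x : ℝ => (x, (0:ℝ)))) = fun x : ℝ => x + 0 := rfl
    rw [this]
    simpa using gaussianReal_map_add_const (μ := 0) (v := v₁) 0
  -- main case
  ext s hs
  rw [Measure.map_apply measurable_add hs, Measure.prod_apply (measurable_add hs)]
  have hslice : ∀ x : ℝ, (gaussianReal 0 v₂ : Measure ℝ) (Prod.mk x ⁻¹' ((fun p : ℝ × ℝ => p.1 + p.2) ⁻¹' s))
      = ∫⁻ y in s, gaussianPDF x v₂ y := by
    intro x
    have hpre : Prod.mk x ⁻¹' ((fun p : ℝ × ℝ => p.1 + p.2) ⁻¹' s) = (fun y => x + y) ⁻¹' s := rfl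
    rw [hpre, ← Measure.map_apply (measurable_const_add x) hs, gaussianReal_map_const_add,
      zero_add, gaussianReal_of_var_ne_zero _ hv₂, withDensity_apply _ hs]
  simp_rw [hslice]
  have hmeas : Measurable (fun x : ℝ => ∫⁻ y in s, gaussianPDF x v₂ y) :=
    (measurable_gaussianPDF_pair v₂).lintegral_prod_right'
  rw [gaussianReal_of_var_ne_zero _ hv₁,
    lintegral_withDensity_eq_lintegral_mul _ (measurable_gaussianPDF _ _) hmeas]
  simp only [Pi.mul_apply]
  have hswap : ∫⁻ x, gaussianPDF 0 v₁ x * ∫⁻ y in s, gaussianPDF x v₂ y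
      = ∫⁻ y in s, ∫⁻ x, gaussianPDF 0 v₁ x * gaussianPDF x v₂ y := by
    simp_rw [← lintegral_const_mul _ (measurable_gaussianPDF _ v₂)]
    refine lintegral_lintegral_swap ?_
    exact (((measurable_gaussianPDF 0 v₁).comp measurable_fst).mul
      (measurable_gaussianPDF_pair v₂)).aemeasurable
  rw [hswap]
  simp_rw [lintegral_gaussianPDF_mul hv₁ hv₂]
  have hsum : v₁ + v₂ ≠ 0 := by
    intro h
    exact hv₁ (by simpa using congrArg (fun t => t) (add_eq_zero.mp h).1)
  rw [gaussianReal_of_var_ne_zero _ hsum, withDensity_apply _ hs]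

lemma pi_map_sum : ∀ (n : ℕ) (c : Fin n → ℝ),
    (Measure.pi fun _ : Fin n => (gaussianReal 0 1 : Measure ℝ)).map
        (fun z : Fin n → ℝ => ∑ i, c i * z i)
      = gaussianReal 0 (∑ i, (NNReal.mk (c i ^ 2) (sq_nonneg _))) := by
  intro n
  induction n with
  | zero =>
    intro c
    rw [Measure.pi_of_empty, Measure.map_dirac' (by fun_prop)]
    simp [gaussianReal_zero_var]
  | succ n ih =>
    intro c
    have mp := measurePreserving_piFinSuccAbove (fun _ : Fin (n+1) => (gaussianReal 0 1 : Measure ℝ)) 0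
    set e := MeasurableEquiv.piFinSuccAbove (fun _ : Fin (n+1) => ℝ) 0 with he
    have hmape : (Measure.pi fun _ : Fin (n+1) => (gaussianReal 0 1 : Measure ℝ)).map e
        = (gaussianReal 0 1 : Measure ℝ).prod
            (Measure.pi fun _ : Fin n => (gaussianReal 0 1 : Measure ℝ)) := mp.map_eq
    have hcomp : (fun z : Fin (n+1) → ℝ => ∑ i, c i * z i)
        = (fun p : ℝ × ℝ => p.1 + p.2)
          ∘ (Prod.map (fun a : ℝ => c 0 * a) (fun w : Fin n → ℝ => ∑ j, c j.succ * w j))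
          ∘ e := by
      funext z
      simp only [Function.comp_apply, Prod.map_apply]
      rw [Fin.sum_univ_succ]
      congr 1
    rw [hcomp, ← Function.comp_assoc, ← Measure.map_map (by fun_prop) e.measurable,
      ← Measure.map_map (by fun_prop) (by fun_prop), hmape,
      ← Measure.map_prod_map _ _ (by fun_prop) (by fun_prop),
      gaussianReal_map_const_mul (μ := 0) (v := 1) (c 0), ih (fun j => c j.succ),
      mul_zero, mul_one, gaussianReal_conv, Fin.sum_univ_succ]

lemma gauss01_Iio_eq_Iic (x : ℝ) : (gaussianReal 0 1 : Measure ℝ) (Set.Iio x)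
    = (gaussianReal 0 1 : Measure ℝ) (Set.Iic x) := by
  have hatom : (gaussianReal 0 1 : Measure ℝ) {x} = 0 :=
    gaussianReal_absolutelyContinuous 0 one_ne_zero (measure_singleton x)
  have : (gaussianReal 0 1 : Measure ℝ) (Set.Iic x)
      = (gaussianReal 0 1 : Measure ℝ) (Set.Iio x) + (gaussianReal 0 1 : Measure ℝ) {x} := by
    rw [← measure_union (by simp) (measurableSet_singleton x), Set.Iio_union_right]
  rw [this, hatom, add_zero]

lemma gauss01_Ici (x : ℝ) : (gaussianReal 0 1 : Measure ℝ) (Set.Ici x)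
    = ENNReal.ofReal (1 - Phi x) := by
  have h1 : (gaussianReal 0 1 : Measure ℝ) (Set.Iic x) = ENNReal.ofReal (Phi x) := by
    rw [Phi, ENNReal.ofReal_toReal (measure_ne_top _ _)]
  have hIci : (gaussianReal 0 1 : Measure ℝ) (Set.Ici x)
      = 1 - (gaussianReal 0 1 : Measure ℝ) (Set.Iio x) := by
    rw [← measure_univ (μ := (gaussianReal 0 1 : Measure ℝ)), ← Set.Iio_union_Ici (a := x),
      measure_union (Set.Iio_disjoint_Ici le_rfl) measurableSet_Ici,
      ENNReal.add_sub_cancel_left (measure_ne_top _ _)]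
  have hPhi1 : Phi x ≤ 1 := by
    rw [Phi]
    exact ENNReal.toReal_le_of_le_ofReal one_pos.le (by simp [prob_le_one])
  rw [hIci, gauss01_Iio_eq_Iic, h1, ← ENNReal.ofReal_one,
    ← ENNReal.ofReal_sub _ (by rw [Phi]; positivity)]

/-- Phi is nonneg. -/
lemma Phi_nonneg (x : ℝ) : 0 ≤ Phi x := ENNReal.toReal_nonneg

theorem stmt_7 (m : ℕ) (hm : 1 ≤ m)
    (Sig : Matrix (Fin m) (Fin m) ℝ)
    (hpd : Sig.PosDef) (hdiag : ∀ i, Sig i i = 1)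
    (hoff : ∀ i j, i ≠ j → Sig i j ∈ Set.Icc (-(1:ℝ) / m) 1)
    (A : Matrix (Fin m) (Fin m) ℝ) (hA : A * A.transpose = Sig)
    (α : ℝ) (hα : α ∈ Set.Ioo (0:ℝ) (1 / (2 * m))) :
    gaussianVec m A {x : Fin m → ℝ | (1 / m : ℝ) * ∑ i : Fin m, Phi (-(x i)) ≤ α}
      ≤ ENNReal.ofReal α := by
  obtain ⟨hα0, hα2⟩ := hα
  have hm0 : (0:ℝ) < m := by exact_mod_cast hm
  have hm1 : (1:ℝ) ≤ m := by exact_mod_cast hm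
  have hαhalf : α < 1 / 2 := lt_of_lt_of_le hα2 (by
    rw [div_le_div_iff₀ (by positivity) (by norm_num)]
    linarith)
  -- the coefficient vector
  set c : Fin m → ℝ := fun j => (1 / m : ℝ) * ∑ i, A i j with hc
  set L : (Fin m → ℝ) → ℝ := fun x => (1 / m : ℝ) * ∑ i, x i with hL
  have hLmeas : Measurable L := by fun_prop
  have hmulVec_eq : A.mulVec = fun z i => ∑ j, A i j * z j := rfl
  have hmulVec : Measurable A.mulVec := by
    rw [hmulVec_eq]
    exact measurable_pi_lambda _ (fun i => by fun_prop)
  have hLcomp : L ∘ A.mulVec = fun z => ∑ j, c j * z j := by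
    funext z
    simp only [Function.comp_apply, hL, hmulVec_eq, hc]
    rw [Finset.sum_comm, Finset.mul_sum]
    congr 1
    funext j
    rw [← Finset.sum_mul]
    ring
  -- Sig entries from A
  have hSig : ∀ i k, Sig i k = ∑ j, A i j * A k j := by
    intro i k
    rw [← hA, Matrix.mul_apply]
    simp [Matrix.transpose_apply]
  -- real variance
  set vR : ℝ := ∑ j, (c j) ^ 2 with hvR
  have key : ∑ i, ∑ k, Sig i k = ∑ j, (∑ i, A i j)^2 := by
    calc ∑ i, ∑ k, Sig i k
        = ∑ i, ∑ k, ∑ j, A i j * A k j := by simp_rw [hSig]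
      _ = ∑ i, ∑ j, ∑ k, A i j * A k j :=
          Finset.sum_congr rfl (fun i _ => Finset.sum_comm)
      _ = ∑ j, ∑ i, ∑ k, A i j * A k j := Finset.sum_comm
      _ = ∑ j, (∑ i, A i j)^2 := by
          refine Finset.sum_congr rfl (fun j _ => ?_)
          rw [sq, Finset.sum_mul_sum]
  have hvar : vR = (1 / (m:ℝ)^2) * ∑ i, ∑ k, Sig i k := by
    rw [hvR, key, Finset.mul_sum]
    refine Finset.sum_congr rfl (fun j _ => ?_)
    rw [hc]
    simp only
    rw [mul_pow]
    ring
  -- bounds on the variance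
  have hone : ∀ i k : Fin m, Sig i k ≤ 1 := by
    intro i k
    by_cases h : i = k
    · subst h; rw [hdiag]
    · exact (hoff i k h).2
  have hub : ∑ i, ∑ k, Sig i k ≤ (m:ℝ)^2 := by
    calc ∑ i, ∑ k, Sig i k ≤ ∑ _i : Fin m, ∑ _k : Fin m, (1:ℝ) :=
        Finset.sum_le_sum (fun i _ => Finset.sum_le_sum (fun k _ => hone i k))
      _ = (m:ℝ)^2 := by simp [sq]
  have hlb : (1:ℝ) ≤ ∑ i, ∑ k, Sig i k := by
    have hterm : ∀ i k : Fin m, (-(1:ℝ)/m) + (if i = k then (1:ℝ) + 1/m else 0) ≤ Sig i k := by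
      intro i k
      by_cases h : i = k
      · subst h
        rw [hdiag]
        rw [if_pos rfl]
        have h1 : (-(1:ℝ)/m) + ((1:ℝ) + 1/m) = 1 := by ring
        linarith
      · simp only [if_neg h, add_zero]
        exact (hoff i k h).1
    have hcomp : ∑ i : Fin m, ∑ k : Fin m, ((-(1:ℝ)/m) + if i = k then (1:ℝ) + 1/m else 0)
        = 1 := by
      have hrow : ∀ i : Fin m,
          ∑ k : Fin m, ((-(1:ℝ)/m) + if i = k then (1:ℝ) + 1/m else 0) = 1/m := by
        intro i
        rw [Finset.sum_add_distrib, Finset.sum_const, Finset.sum_ite_eq]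
        simp only [Finset.mem_univ, if_pos, Finset.card_univ, Fintype.card_fin, nsmul_eq_mul]
        field_simp
        ring
      simp_rw [hrow]
      rw [Finset.sum_const, Finset.card_univ, Fintype.card_fin, nsmul_eq_mul]
      field_simp
    calc (1:ℝ) = ∑ i : Fin m, ∑ k : Fin m, ((-(1:ℝ)/m) + if i = k then (1:ℝ) + 1/m else 0) :=
        hcomp.symm
      _ ≤ ∑ i, ∑ k, Sig i k :=
        Finset.sum_le_sum (fun i _ => Finset.sum_le_sum (fun k _ => hterm i k))
  have hv0 : 0 < vR := by
    rw [hvar]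
    have h1 : (0:ℝ) < ∑ i, ∑ k, Sig i k := lt_of_lt_of_le one_pos hlb
    positivity
  have hv1 : vR ≤ 1 := by
    rw [hvar]
    calc (1 / (m:ℝ)^2) * ∑ i, ∑ k, Sig i k ≤ (1 / (m:ℝ)^2) * (m:ℝ)^2 :=
        mul_le_mul_of_nonneg_left hub (by positivity)
      _ = 1 := by field_simp
  -- NNReal variance
  set V : NNReal := ∑ j, (NNReal.mk (c j ^ 2) (sq_nonneg _)) with hV
  have hVcoe : (V : ℝ) = vR := by rw [hV, hvR]; push_cast; rfl
  -- pushforward identification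
  have hmap : (gaussianVec m A).map L = gaussianReal 0 V := by
    rw [gaussianVec, Measure.map_map hLmeas hmulVec, hLcomp, pi_map_sum]
  -- quantile
  obtain ⟨q, hq⟩ := exists_Phi_eq hα0 hαhalf
  set S : Set ℝ := {y | Phi (-y) ≤ α} with hS
  have hSmeas : MeasurableSet S :=
    (isClosed_le (continuous_Phi.comp continuous_neg) continuous_const).measurableSet
  have hmα : (m:ℝ) * α < 1/2 := by
    have := mul_lt_mul_of_pos_left hα2 hm0
    calc (m:ℝ) * α < m * (1 / (2*m)) := this
      _ = 1/2 := by field_simp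
  -- event inclusion via Jensen
  have hsub : {x : Fin m → ℝ | (1 / m : ℝ) * ∑ i : Fin m, Phi (-(x i)) ≤ α} ⊆ L ⁻¹' S := by
    intro x hx
    simp only [Set.mem_setOf_eq] at hx
    have hnn : ∀ i : Fin m, 0 ≤ Phi (-(x i)) := fun i => Phi_nonneg _
    have hsum_le : ∑ i, Phi (-(x i)) ≤ m * α := by
      have h2 := mul_le_mul_of_nonneg_left hx hm0.le
      calc ∑ i, Phi (-(x i)) = (m:ℝ) * ((1/m) * ∑ i, Phi (-(x i))) := by
            field_simp
        _ ≤ (m:ℝ) * α := h2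
    have hxpos : ∀ i : Fin m, 0 ≤ x i := by
      intro i
      by_contra hneg
      push_neg at hneg
      have h2 : Phi 0 < Phi (-(x i)) := strictMono_Phi (by linarith)
      have h3 : Phi (-(x i)) ≤ ∑ i, Phi (-(x i)) :=
        Finset.single_le_sum (fun i _ => hnn i) (Finset.mem_univ i)
      rw [Phi_zero] at h2
      linarith
    have hw : ∑ _i : Fin m, (1/(m:ℝ)) = 1 := by
      rw [Finset.sum_const, Finset.card_univ, Fintype.card_fin, nsmul_eq_mul]
      field_simp
    have hk := convexOn_Phi_neg.map_sum_le (t := Finset.univ) (w := fun _ : Fin m => 1/(m:ℝ))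
      (p := fun i => x i) (fun i _ => by positivity) hw (fun i _ => hxpos i)
    simp only [smul_eq_mul] at hk
    have hLx : L x = ∑ i, (1/(m:ℝ)) * x i := by rw [hL]; simp [Finset.mul_sum]
    simp only [Set.mem_preimage, hS, Set.mem_setOf_eq]
    rw [hLx]
    calc Phi (-(∑ i, (1/(m:ℝ)) * x i)) ≤ ∑ i, (1/(m:ℝ)) * Phi (-(x i)) := hk
      _ = (1/(m:ℝ)) * ∑ i, Phi (-(x i)) := by rw [Finset.mul_sum]
      _ ≤ α := hx
  -- scaling
  set σ : ℝ := Real.sqrt vR with hσ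
  have hσ0 : 0 < σ := Real.sqrt_pos.mpr hv0
  have hσ1 : σ ≤ 1 := by
    rw [hσ, show (1:ℝ) = Real.sqrt 1 by simp]
    exact Real.sqrt_le_sqrt hv1
  have hσsq : σ^2 = vR := Real.sq_sqrt hv0.le
  have hmapσ : (gaussianReal 0 1 : Measure ℝ).map (σ * ·) = gaussianReal 0 V := by
    rw [gaussianReal_map_const_mul, mul_zero]
    congr 1
    apply NNReal.coe_injective
    push_cast
    rw [hσsq, hVcoe]
    ring
  have hsub2 : (σ * ·) ⁻¹' S ⊆ Set.Ici q := by
    intro z hz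
    simp only [Set.mem_preimage, hS, Set.mem_setOf_eq] at hz
    have hz0 : 0 < z := by
      by_contra h
      push_neg at h
      have h1 : Phi 0 ≤ Phi (-(σ*z)) := strictMono_Phi.le_iff_le.mpr (by nlinarith)
      rw [Phi_zero] at h1
      linarith
    have hle : σ * z ≤ z := by nlinarith
    have h4 : Phi (-z) ≤ Phi (-(σ*z)) := strictMono_Phi.le_iff_le.mpr (by linarith)
    have hq' : Phi (-q) = α := by rw [Phi_neg, hq]; ring
    have h5 : Phi (-z) ≤ Phi (-q) := by linarith
    have h6 : -z ≤ -q := strictMono_Phi.le_iff_le.mp h5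
    simp only [Set.mem_Ici]
    linarith
  calc gaussianVec m A {x : Fin m → ℝ | (1 / m : ℝ) * ∑ i : Fin m, Phi (-(x i)) ≤ α}
      ≤ gaussianVec m A (L ⁻¹' S) := measure_mono hsub
    _ = (gaussianVec m A).map L S := (Measure.map_apply hLmeas hSmeas).symm
    _ = gaussianReal 0 V S := by rw [hmap]
    _ = (gaussianReal 0 1 : Measure ℝ) ((σ * ·) ⁻¹' S) := by
        rw [← hmapσ, Measure.map_apply (measurable_const_mul σ) hSmeas]
    _ ≤ (gaussianReal 0 1 : Measure ℝ) (Set.Ici q) := measure_mono hsub2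
    _ = ENNReal.ofReal (1 - Phi q) := gauss01_Ici q
    _ = ENNReal.ofReal α := by rw [hq]; ring_nf
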